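/- (Chang–Wilson–Wolff inequality) There exist constants c₁, c₂ > 0 such that for every f ∈ L²(ℝ²), every λ > 0 and every 0 < ε < 1, one has |{x ∈ ℝ² : |f(x) − E₀f(x)| > 2λ and Δ(f)(x) < ελ}| ≤ c₂ e^{−c₁/ε²} |{x ∈ ℝ² : sup_{k≥0} |E_k f(x)| > ελ}|. -/

import Mathlib

noncomputable section
open MeasureTheory Filter Metric Set
open scoped ENNReal Real Topology

/-- The plane `ℝ²` with its Euclidean norm. -/
abbrev P2 : Type := EuclideanSpace ℝ (Fin 2)

/-- The dyadic square of side length `2^{-j}` containing `x`. -/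
def dySq (j : ℕ) (x : P2) : Set P2 :=
  {y : P2 | ⌊(2:ℝ)^j * x 0⌋ = ⌊(2:ℝ)^j * y 0⌋ ∧ ⌊(2:ℝ)^j * x 1⌋ = ⌊(2:ℝ)^j * y 1⌋}

/-- Conditional expectation of `f` with respect to the σ-algebra generated by the dyadic
squares of side length `2^{-j}`: `E_j f (x) = |Q|⁻¹ ∫_Q f`, `Q` the dyadic square
of measure `2^{-2j}` containing `x`. -/
def Ej (j : ℕ) (f : P2 → ℝ) (x : P2) : ℝ :=
  ((2:ℝ) ^ (2 * j)) • ∫ y in dySq j x, f y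

/-- The martingale difference `Δ_k f = E_{k+1} f − E_k f`. -/
def Dk (k : ℕ) (f : P2 → ℝ) (x : P2) : ℝ := Ej (k + 1) f x - Ej k f x

/-- The discrete square function `Δ(f)(x) = (Σ_{k ≥ 0} |Δ_k f(x)|²)^{1/2}`,
valued in `ℝ≥0∞`. -/
def sqFn (f : P2 → ℝ) (x : P2) : ℝ≥0∞ :=
  (∑' k : ℕ, (‖Dk k f x‖₊ : ℝ≥0∞) ^ 2) ^ (1/2 : ℝ)

namespace CWW

/-- The dyadic square at level `n` indexed by `(p, q) : ℤ × ℤ`. -/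
def sq (n : ℕ) (c : ℤ × ℤ) : Set P2 :=
  {y : P2 | ⌊(2:ℝ)^n * y 0⌋ = c.1 ∧ ⌊(2:ℝ)^n * y 1⌋ = c.2}

lemma mcoord (i : Fin 2) : Measurable fun x : P2 => x i := (measurable_pi_apply i).comp (WithLp.measurable_ofLp _ _)

lemma measurable_flr (n : ℕ) : Measurable fun x : P2 => (⌊(2:ℝ)^n * x 0⌋, ⌊(2:ℝ)^n * x 1⌋) := by
  apply Measurable.prod <;>
    exact Int.measurable_floor.comp (measurable_const.mul (by exact (measurable_pi_apply _).comp (WithLp.measurable_ofLp _ _)))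

lemma measurableSet_sq (n : ℕ) (c : ℤ × ℤ) : MeasurableSet (sq n c) := by
  have : sq n c = (fun x : P2 => (⌊(2:ℝ)^n * x 0⌋, ⌊(2:ℝ)^n * x 1⌋)) ⁻¹' {c} := by
    ext y; simp [sq, Prod.ext_iff]
  rw [this]
  exact measurable_flr n (MeasurableSet.singleton c)

lemma mem_sq_iff {n : ℕ} {c : ℤ × ℤ} {y : P2} :
    y ∈ sq n c ↔ ⌊(2:ℝ)^n * y 0⌋ = c.1 ∧ ⌊(2:ℝ)^n * y 1⌋ = c.2 := Iff.rfl

lemma mem_sq_self (n : ℕ) (x : P2) : x ∈ sq n (⌊(2:ℝ)^n * x 0⌋, ⌊(2:ℝ)^n * x 1⌋) := ⟨rfl, rfl⟩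

lemma dySq_eq_sq {n : ℕ} {c : ℤ × ℤ} {x : P2} (hx : x ∈ sq n c) : dySq n x = sq n c := by
  obtain ⟨h1, h2⟩ := hx
  ext y
  simp only [dySq, mem_setOf_eq, sq, h1, h2, eq_comm, Set.mem_setOf_eq]

lemma sq_disjoint {n : ℕ} {c c' : ℤ × ℤ} (h : c ≠ c') : Disjoint (sq n c) (sq n c') := by
  rw [Set.disjoint_left]
  rintro y ⟨h1, h2⟩ ⟨h1', h2'⟩
  exact h (Prod.ext (h1.symm.trans h1') (h2.symm.trans h2'))

lemma iUnion_sq (n : ℕ) : (⋃ c : ℤ × ℤ, sq n c) = univ := by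
  ext x
  simp only [mem_iUnion, mem_univ, iff_true]
  exact ⟨_, mem_sq_self n x⟩

/-- floor halving : `⌊t⌋ = ⌊2t⌋ / 2`. -/
lemma floor_half (t : ℝ) : ⌊t⌋ = ⌊2*t⌋ / 2 := by
  have h1 : (↑⌊2*t⌋ : ℝ) ≤ 2*t := Int.floor_le _
  have h2 : 2*t < ⌊2*t⌋ + 1 := Int.lt_floor_add_one _
  set m := ⌊2*t⌋ with hm
  have e1 : 2 * (m / 2) ≤ m := by omega
  have e2 : m ≤ 2 * (m / 2) + 1 := by omega
  rw [Int.floor_eq_iff]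
  have c1 : ((2 * (m/2) : ℤ) : ℝ) ≤ (m : ℝ) := by exact_mod_cast e1
  have c2 : (m : ℝ) ≤ ((2 * (m/2) + 1 : ℤ) : ℝ) := by exact_mod_cast e2
  push_cast at c1 c2 ⊢
  constructor <;> nlinarith

/-- If two reals have the same level-`n+1` dyadic coordinate, they share level-`n`. -/
lemma floor_step {n : ℕ} {a b : ℝ} (h : ⌊(2:ℝ)^(n+1) * a⌋ = ⌊(2:ℝ)^(n+1) * b⌋) :
    ⌊(2:ℝ)^n * a⌋ = ⌊(2:ℝ)^n * b⌋ := by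
  have ha : ⌊(2:ℝ)^n * a⌋ = ⌊2 * ((2:ℝ)^n * a)⌋ / 2 := floor_half _
  have hb : ⌊(2:ℝ)^n * b⌋ = ⌊2 * ((2:ℝ)^n * b)⌋ / 2 := floor_half _
  have e : ∀ t : ℝ, 2 * ((2:ℝ)^n * t) = (2:ℝ)^(n+1) * t := by intro t; ring
  rw [ha, hb, e, e, h]

lemma floor_coarse {k n : ℕ} (hkn : k ≤ n) {a b : ℝ} (h : ⌊(2:ℝ)^n * a⌋ = ⌊(2:ℝ)^n * b⌋) :
    ⌊(2:ℝ)^k * a⌋ = ⌊(2:ℝ)^k * b⌋ := by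
  induction n, hkn using Nat.le_induction with
  | base => exact h
  | succ n hkn ih => exact ih (floor_step h)

lemma dySq_congr {k n : ℕ} (hkn : k ≤ n) {c : ℤ × ℤ} {x y : P2}
    (hx : x ∈ sq n c) (hy : y ∈ sq n c) : dySq k x = dySq k y := by
  obtain ⟨hx1, hx2⟩ := hx; obtain ⟨hy1, hy2⟩ := hy
  have h1 : ⌊(2:ℝ)^k * x 0⌋ = ⌊(2:ℝ)^k * y 0⌋ := floor_coarse hkn (hx1.trans hy1.symm)
  have h2 : ⌊(2:ℝ)^k * x 1⌋ = ⌊(2:ℝ)^k * y 1⌋ := floor_coarse hkn (hx2.trans hy2.symm)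
  ext z; simp only [dySq, mem_setOf_eq, h1, h2]

lemma Ej_congr {k n : ℕ} (hkn : k ≤ n) {c : ℤ × ℤ} {x y : P2} (f : P2 → ℝ)
    (hx : x ∈ sq n c) (hy : y ∈ sq n c) : Ej k f x = Ej k f y := by
  unfold Ej; rw [dySq_congr hkn hx hy]

/-- The four children of a dyadic square. -/
def children (c : ℤ × ℤ) : Finset (ℤ × ℤ) :=
  {(2*c.1, 2*c.2), (2*c.1+1, 2*c.2), (2*c.1, 2*c.2+1), (2*c.1+1, 2*c.2+1)}

lemma sq_eq_union_children (n : ℕ) (c : ℤ × ℤ) :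
    sq n c = ⋃ d ∈ children c, sq (n+1) d := by
  ext y
  have e : ∀ t : ℝ, 2 * ((2:ℝ)^n * t) = (2:ℝ)^(n+1) * t := by intro t; ring
  have h0 : ⌊(2:ℝ)^n * y 0⌋ = ⌊(2:ℝ)^(n+1) * y 0⌋ / 2 := by rw [floor_half, e]
  have h1 : ⌊(2:ℝ)^n * y 1⌋ = ⌊(2:ℝ)^(n+1) * y 1⌋ / 2 := by rw [floor_half, e]
  simp only [mem_sq_iff, children, Finset.mem_insert, Finset.mem_singleton, mem_iUnion,
    exists_prop, Prod.ext_iff]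
  constructor
  · rintro ⟨hp, hq⟩
    rw [h0] at hp; rw [h1] at hq
    rcases Int.even_or_odd ⌊(2:ℝ)^(n+1) * y 0⌋ with he | he <;>
      rcases Int.even_or_odd ⌊(2:ℝ)^(n+1) * y 1⌋ with he' | he'
    all_goals {
      refine ⟨(⌊(2:ℝ)^(n+1) * y 0⌋, ⌊(2:ℝ)^(n+1) * y 1⌋), ?_, rfl, rfl⟩
      obtain ⟨a, ha⟩ := he; obtain ⟨b, hb⟩ := he'
      omega }
  · rintro ⟨d, hd, hp, hq⟩
    rw [h0, h1, hp, hq]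
    rcases hd with h | h | h | h <;> rw [h.1, h.2] <;> omega

lemma children_subset {n : ℕ} {c d : ℤ × ℤ} (hd : d ∈ children c) : sq (n+1) d ⊆ sq n c := by
  rw [sq_eq_union_children n c]
  exact subset_biUnion_of_mem (u := fun d => sq (n+1) d) hd

/-- Dichotomy: a level-`n` square is contained in, or disjoint from, a level-`m` square
(`m ≤ n`). -/
lemma sq_subset_or_disjoint {m n : ℕ} (hmn : m ≤ n) (c d : ℤ × ℤ) :
    sq n d ⊆ sq m c ∨ sq n d ∩ sq m c = ∅ := by
  by_cases h : sq n d ∩ sq m c = ∅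
  · exact Or.inr h
  · left
    obtain ⟨z, hzd, hzc⟩ := Set.nonempty_iff_ne_empty.2 h
    intro y hy
    obtain ⟨hz1, hz2⟩ := hzd; obtain ⟨hy1, hy2⟩ := hy
    have h1 := floor_coarse hmn (hy1.trans hz1.symm)
    have h2 := floor_coarse hmn (hy2.trans hz2.symm)
    exact ⟨h1.trans (by rw [← hzc.1]), h2.trans (by rw [← hzc.2])⟩


lemma volume_box (s t : Set ℝ) (hs : MeasurableSet s) (ht : MeasurableSet t) :
    volume {y : P2 | y 0 ∈ s ∧ y 1 ∈ t} = volume s * volume t := by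
  have hpre : {y : P2 | y 0 ∈ s ∧ y 1 ∈ t}
      = (MeasurableEquiv.toLp 2 (Fin 2 → ℝ)).symm ⁻¹'
        (Set.univ.pi (fun i : Fin 2 => if i = 0 then s else t)) := by
    ext y
    simp only [Set.mem_setOf_eq, Set.mem_preimage, Set.mem_pi, Set.mem_univ, forall_true_left]
    constructor
    · rintro ⟨h0, h1⟩ i
      fin_cases i <;> simpa
    · intro h
      exact ⟨by simpa using h 0, by simpa using h 1⟩
  rw [hpre, (EuclideanSpace.volume_preserving_symm_measurableEquiv_toLp (Fin 2)).measure_preimage]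
  · rw [volume_pi_pi, Fin.prod_univ_two]
    simp
  · refine (MeasurableSet.univ_pi fun i => ?_).nullMeasurableSet
    by_cases h : i = 0 <;> simp [h, hs, ht]

/-- The volume of a level-`n` dyadic square. -/
def V (n : ℕ) : ℝ≥0∞ := ENNReal.ofReal (((4:ℝ)^n)⁻¹)

lemma sq_eq_box (n : ℕ) (c : ℤ × ℤ) :
    sq n c = {y : P2 | y 0 ∈ Ico ((c.1 : ℝ)/2^n) ((c.1+1)/2^n) ∧
      y 1 ∈ Ico ((c.2 : ℝ)/2^n) ((c.2+1)/2^n)} := by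
  have hpow : (0:ℝ) < 2^n := by positivity
  ext y
  simp only [mem_sq_iff, Set.mem_setOf_eq, Set.mem_Ico]
  rw [Int.floor_eq_iff, Int.floor_eq_iff]
  constructor
  · rintro ⟨⟨a1, a2⟩, b1, b2⟩
    refine ⟨⟨?_, ?_⟩, ?_, ?_⟩
    · rw [div_le_iff₀ hpow]; linarith
    · rw [lt_div_iff₀ hpow]; linarith
    · rw [div_le_iff₀ hpow]; linarith
    · rw [lt_div_iff₀ hpow]; linarith
  · rintro ⟨⟨a1, a2⟩, b1, b2⟩
    rw [div_le_iff₀ hpow] at a1 b1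
    rw [lt_div_iff₀ hpow] at a2 b2
    exact ⟨⟨by linarith, by linarith⟩, by linarith, by linarith⟩

lemma volume_sq (n : ℕ) (c : ℤ × ℤ) : volume (sq n c) = V n := by
  rw [sq_eq_box, volume_box _ _ measurableSet_Ico measurableSet_Ico,
    Real.volume_Ico, Real.volume_Ico]
  have h : ∀ p : ℤ, ((p:ℝ)+1)/2^n - (p:ℝ)/2^n = ((2:ℝ)^n)⁻¹ := by
    intro p; field_simp; ring
  rw [h, h, ← ENNReal.ofReal_mul (by positivity)]
  unfold V
  congr 1
  rw [← mul_inv, ← mul_pow]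
  norm_num

lemma V_ne_zero (n : ℕ) : V n ≠ 0 := by
  simp only [V, ne_eq, ENNReal.ofReal_eq_zero, not_le]
  positivity

lemma V_ne_top (n : ℕ) : V n ≠ ⊤ := ENNReal.ofReal_ne_top

lemma V_succ (n : ℕ) : V n = 4 * V (n+1) := by
  unfold V
  rw [show (4:ℝ≥0∞) = ENNReal.ofReal (4:ℝ) by norm_num, ← ENNReal.ofReal_mul (by norm_num)]
  congr 1
  rw [pow_succ]
  field_simp

lemma two_pow_mul_V (n : ℕ) : ENNReal.ofReal ((2:ℝ)^(2*n)) * V n = 1 := by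
  unfold V
  rw [← ENNReal.ofReal_mul (by positivity)]
  rw [show (2:ℝ)^(2*n) = 4^n by rw [pow_mul]; norm_num]
  rw [mul_inv_cancel₀ (by positivity)]
  simp

/-- `exp (v) ≤ (1 - v)⁻¹` for `v < 1`. -/
lemma exp_le_inv_one_sub {v : ℝ} (hv : v < 1) : Real.exp v ≤ (1 - v)⁻¹ := by
  have h1 : 0 < 1 - v := by linarith
  have h2 : 1 - v ≤ Real.exp (-v) := by
    have := Real.add_one_le_exp (-v); linarith
  rw [le_inv_comm₀ (Real.exp_pos v) h1]
  calc (1 - v) ≤ Real.exp (-v) := h2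
    _ = (Real.exp v)⁻¹ := Real.exp_neg v

lemma exp_quad_le_one_add {u : ℝ} (hu : -3/4 ≤ u) : Real.exp (u - 4*u^2) ≤ 1 + u := by
  have h1 : u - 4*u^2 < 1 := by nlinarith
  have h2 : Real.exp (u - 4*u^2) ≤ (1 - (u - 4*u^2))⁻¹ := exp_le_inv_one_sub h1
  have h3 : (0:ℝ) < 1 - (u - 4*u^2) := by nlinarith
  refine h2.trans ?_
  rw [inv_le_iff_one_le_mul₀ h3]
  nlinarith

lemma exp_quad_le_const (u : ℝ) : Real.exp (u - 4*u^2) ≤ 16/15 := by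
  have h1 : u - 4*u^2 ≤ 1/16 := by nlinarith [sq_nonneg (u - 1/8)]
  calc Real.exp (u - 4*u^2) ≤ Real.exp (1/16) := Real.exp_le_exp.2 h1
    _ ≤ (1 - 1/16)⁻¹ := exp_le_inv_one_sub (by norm_num)
    _ = 16/15 := by norm_num

lemma exp_quad_le_half {u : ℝ} (hu : u ≤ -3/4) : Real.exp (u - 4*u^2) ≤ 1/2 := by
  have h1 : u - 4*u^2 ≤ -1 := by nlinarith
  calc Real.exp (u - 4*u^2) ≤ Real.exp (-1) := Real.exp_le_exp.2 h1
    _ ≤ 1/2 := by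
        rw [Real.exp_neg, inv_le_comm₀ (Real.exp_pos 1) (by norm_num)]
        have := Real.add_one_le_exp (1:ℝ); linarith

/-- The key scalar inequality behind the sub-Gaussian estimate. -/
lemma key_scalar {u₁ u₂ u₃ u₄ : ℝ} (h : u₁ + u₂ + u₃ + u₄ = 0) :
    Real.exp (u₁ - 4*u₁^2) + Real.exp (u₂ - 4*u₂^2) + Real.exp (u₃ - 4*u₃^2)
      + Real.exp (u₄ - 4*u₄^2) ≤ 4 := by
  have haux : ∀ a b c : ℝ, ∀ d : ℝ, d ≤ -3/4 →
      Real.exp (a - 4*a^2) + Real.exp (b - 4*b^2) + Real.exp (c - 4*c^2)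
        + Real.exp (d - 4*d^2) ≤ 4 := by
    intro a b c d hd
    have := exp_quad_le_const a
    have := exp_quad_le_const b
    have := exp_quad_le_const c
    have := exp_quad_le_half hd
    linarith
  by_cases h1 : -3/4 ≤ u₁
  · by_cases h2 : -3/4 ≤ u₂
    · by_cases h3 : -3/4 ≤ u₃
      · by_cases h4 : -3/4 ≤ u₄
        · have := exp_quad_le_one_add h1
          have := exp_quad_le_one_add h2
          have := exp_quad_le_one_add h3
          have := exp_quad_le_one_add h4
          linarith
        · have := haux u₁ u₂ u₃ u₄ (by linarith); linarith
      · have := haux u₁ u₂ u₄ u₃ (by linarith); linarith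
    · have := haux u₁ u₃ u₄ u₂ (by linarith); linarith
  · have := haux u₂ u₃ u₄ u₁ (by linarith); linarith

variable {f : P2 → ℝ}

lemma integrableOn_of_fin (hf : MemLp f 2 volume) {s : Set P2} (hvol : volume s ≠ ⊤) :
    IntegrableOn f s := by
  have : IsFiniteMeasure (volume.restrict s) :=
    ⟨by rwa [Measure.restrict_apply_univ, lt_top_iff_ne_top]⟩
  exact (hf.restrict s).integrable (by norm_num)

lemma Ej_apply_sq {n : ℕ} {c : ℤ × ℤ} {x : P2} (f : P2 → ℝ) (hx : x ∈ sq n c) :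
    Ej n f x = (2:ℝ)^(2*n) * ∫ y in sq n c, f y := by
  unfold Ej; rw [dySq_eq_sq hx, smul_eq_mul]

lemma measurable_Ej (n : ℕ) (f : P2 → ℝ) : Measurable (Ej n f) := by
  have h : Ej n f = (fun c : ℤ × ℤ => (2:ℝ)^(2*n) * ∫ y in sq n c, f y) ∘
      (fun x : P2 => (⌊(2:ℝ)^n * x 0⌋, ⌊(2:ℝ)^n * x 1⌋)) :=
    funext fun x => Ej_apply_sq f (mem_sq_self n x)
  rw [h]
  exact (measurable_of_countable _).comp (measurable_flr n)

lemma measurable_Dk (k : ℕ) (f : P2 → ℝ) : Measurable (Dk k f) :=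
  (measurable_Ej (k+1) f).sub (measurable_Ej k f)

lemma Dk_congr {k n : ℕ} (hkn : k + 1 ≤ n) {c : ℤ × ℤ} {x y : P2} (f : P2 → ℝ)
    (hx : x ∈ sq n c) (hy : y ∈ sq n c) : Dk k f x = Dk k f y := by
  unfold Dk
  rw [Ej_congr hkn f hx hy, Ej_congr (Nat.le_of_succ_le hkn) f hx hy]

/-- Four children coordinates. -/
lemma sq_eq_union4 (n : ℕ) (c : ℤ × ℤ) :
    sq n c = sq (n+1) (2*c.1, 2*c.2) ∪ sq (n+1) (2*c.1+1, 2*c.2)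
      ∪ sq (n+1) (2*c.1, 2*c.2+1) ∪ sq (n+1) (2*c.1+1, 2*c.2+1) := by
  ext y
  have e : ∀ t : ℝ, 2 * ((2:ℝ)^n * t) = (2:ℝ)^(n+1) * t := by intro t; ring
  have h0 : ⌊(2:ℝ)^n * y 0⌋ = ⌊(2:ℝ)^(n+1) * y 0⌋ / 2 := by rw [floor_half, e]
  have h1 : ⌊(2:ℝ)^n * y 1⌋ = ⌊(2:ℝ)^(n+1) * y 1⌋ / 2 := by rw [floor_half, e]
  simp only [mem_sq_iff, Set.mem_union, h0, h1]
  omega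

lemma integral_eq_sum_children (hf : MemLp f 2 volume) (n : ℕ) (c : ℤ × ℤ) :
    ∫ y in sq n c, f y =
      ((∫ y in sq (n+1) (2*c.1, 2*c.2), f y) + ∫ y in sq (n+1) (2*c.1+1, 2*c.2), f y)
      + ((∫ y in sq (n+1) (2*c.1, 2*c.2+1), f y) + ∫ y in sq (n+1) (2*c.1+1, 2*c.2+1), f y) := by
  have hmeas : ∀ d : ℤ × ℤ, MeasurableSet (sq (n+1) d) := measurableSet_sq (n+1)
  have hint : ∀ d : ℤ × ℤ, IntegrableOn f (sq (n+1) d) := fun d =>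
    integrableOn_of_fin hf (by rw [volume_sq]; exact V_ne_top _)
  have hd : ∀ d d' : ℤ × ℤ, d ≠ d' → Disjoint (sq (n+1) d) (sq (n+1) d') :=
    fun d d' h => sq_disjoint h
  have hdisj12 : Disjoint (sq (n+1) (2*c.1, 2*c.2)) (sq (n+1) (2*c.1+1, 2*c.2)) :=
    hd _ _ (by simp [Prod.ext_iff]; try omega)
  have h12 : ∫ y in (sq (n+1) (2*c.1, 2*c.2) ∪ sq (n+1) (2*c.1+1, 2*c.2)), f y
      = (∫ y in sq (n+1) (2*c.1, 2*c.2), f y) + ∫ y in sq (n+1) (2*c.1+1, 2*c.2), f y :=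
    setIntegral_union hdisj12 (hmeas _) (hint _) (hint _)
  have hdisj34 : Disjoint (sq (n+1) (2*c.1, 2*c.2+1)) (sq (n+1) (2*c.1+1, 2*c.2+1)) :=
    hd _ _ (by simp [Prod.ext_iff]; try omega)
  have h34 : ∫ y in (sq (n+1) (2*c.1, 2*c.2+1) ∪ sq (n+1) (2*c.1+1, 2*c.2+1)), f y
      = (∫ y in sq (n+1) (2*c.1, 2*c.2+1), f y) + ∫ y in sq (n+1) (2*c.1+1, 2*c.2+1), f y :=
    setIntegral_union hdisj34 (hmeas _) (hint _) (hint _)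
  have hdisjb : Disjoint (sq (n+1) (2*c.1, 2*c.2) ∪ sq (n+1) (2*c.1+1, 2*c.2))
      (sq (n+1) (2*c.1, 2*c.2+1) ∪ sq (n+1) (2*c.1+1, 2*c.2+1)) := by
    rw [Set.disjoint_union_left]
    constructor <;> rw [Set.disjoint_union_right] <;>
      exact ⟨hd _ _ (by simp [Prod.ext_iff]; try omega), hd _ _ (by simp [Prod.ext_iff]; try omega)⟩
  have hbig : ∫ y in ((sq (n+1) (2*c.1, 2*c.2) ∪ sq (n+1) (2*c.1+1, 2*c.2))
      ∪ (sq (n+1) (2*c.1, 2*c.2+1) ∪ sq (n+1) (2*c.1+1, 2*c.2+1))), f y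
      = (∫ y in (sq (n+1) (2*c.1, 2*c.2) ∪ sq (n+1) (2*c.1+1, 2*c.2)), f y)
        + ∫ y in (sq (n+1) (2*c.1, 2*c.2+1) ∪ sq (n+1) (2*c.1+1, 2*c.2+1)), f y :=
    setIntegral_union hdisjb ((hmeas _).union (hmeas _)) ((hint _).union (hint _))
      ((hint _).union (hint _))
  have hu : sq n c = (sq (n+1) (2*c.1, 2*c.2) ∪ sq (n+1) (2*c.1+1, 2*c.2))
      ∪ (sq (n+1) (2*c.1, 2*c.2+1) ∪ sq (n+1) (2*c.1+1, 2*c.2+1)) := by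
    rw [sq_eq_union4 n c, Set.union_assoc]
  rw [hu, hbig, h12, h34]

/-- The center value: `Ej n f` on `sq n c`. -/
lemma Dk_value {n : ℕ} {c d : ℤ × ℤ} (f : P2 → ℝ) (hsub : sq (n+1) d ⊆ sq n c)
    {y : P2} (hy : y ∈ sq (n+1) d) :
    Dk n f y = (2:ℝ)^(2*(n+1)) * (∫ z in sq (n+1) d, f z)
      - (2:ℝ)^(2*n) * ∫ z in sq n c, f z := by
  unfold Dk
  rw [Ej_apply_sq f hy, Ej_apply_sq f (hsub hy)]

/-- One-step estimate: the exponential factor integrates to at most the measure. -/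
lemma step_bound (hfm : Measurable f) (hf : MemLp f 2 volume) (θ : ℝ) (n : ℕ) (c : ℤ × ℤ) :
    ∫⁻ y in sq n c, ENNReal.ofReal
        (Real.exp (θ * Dk n f y - 4 * θ^2 * (Dk n f y)^2)) ≤ V n := by
  classical
  set d1 : ℤ × ℤ := (2*c.1, 2*c.2)
  set d2 : ℤ × ℤ := (2*c.1+1, 2*c.2)
  set d3 : ℤ × ℤ := (2*c.1, 2*c.2+1)
  set d4 : ℤ × ℤ := (2*c.1+1, 2*c.2+1)
  have hu : sq n c = sq (n+1) d1 ∪ sq (n+1) d2 ∪ sq (n+1) d3 ∪ sq (n+1) d4 := sq_eq_union4 n c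
  have hsub : ∀ d ∈ [d1, d2, d3, d4], sq (n+1) d ⊆ sq n c := by
    intro d hd
    rw [hu]
    fin_cases hd
    · exact (subset_union_left.trans subset_union_left).trans subset_union_left
    · exact (subset_union_right.trans subset_union_left).trans subset_union_left
    · exact subset_union_right.trans subset_union_left
    · exact subset_union_right
  -- values on children
  set A : ℤ × ℤ → ℝ := fun d => (2:ℝ)^(2*(n+1)) * ∫ z in sq (n+1) d, f z
  set Vc : ℝ := (2:ℝ)^(2*n) * ∫ z in sq n c, f z
  have hsum : (A d1 - Vc) + (A d2 - Vc) + (A d3 - Vc) + (A d4 - Vc) = 0 := by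
    have h4 : A d1 + A d2 + A d3 + A d4 = 4 * Vc := by
      simp only [A, Vc]
      rw [integral_eq_sum_children hf n c]
      rw [show 2*(n+1) = 2*n + 2 by ring, pow_add]
      ring
    linarith
  have key := key_scalar (u₁ := θ*(A d1 - Vc)) (u₂ := θ*(A d2 - Vc)) (u₃ := θ*(A d3 - Vc))
    (u₄ := θ*(A d4 - Vc)) (by rw [← mul_add, ← mul_add, ← mul_add, hsum, mul_zero])
  -- lintegral over each child is constant
  have hchild : ∀ d ∈ [d1, d2, d3, d4],
      (∫⁻ y in sq (n+1) d, ENNReal.ofReal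
        (Real.exp (θ * Dk n f y - 4 * θ^2 * (Dk n f y)^2)))
      = ENNReal.ofReal (Real.exp (θ*(A d - Vc) - 4 * (θ*(A d - Vc))^2)) * V (n+1) := by
    intro d hd
    have h1 : ∀ y ∈ sq (n+1) d, ENNReal.ofReal
        (Real.exp (θ * Dk n f y - 4 * θ^2 * (Dk n f y)^2))
        = ENNReal.ofReal (Real.exp (θ*(A d - Vc) - 4 * (θ*(A d - Vc))^2)) := by
      intro y hy
      rw [Dk_value f (hsub d hd) hy]
      congr 2
      ring
    rw [setLIntegral_congr_fun (measurableSet_sq _ _) h1, setLIntegral_const,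
      volume_sq]
  -- put together
  have hdisj12 : Disjoint (sq (n+1) d1) (sq (n+1) d2) := sq_disjoint (by simp [d1, d2, Prod.ext_iff])
  have hdisj3 : Disjoint (sq (n+1) d1 ∪ sq (n+1) d2) (sq (n+1) d3) := by
    rw [Set.disjoint_union_left]
    constructor <;> · apply sq_disjoint; simp [d1, d2, d3, Prod.ext_iff]; try omega
  have hdisj4 : Disjoint (sq (n+1) d1 ∪ sq (n+1) d2 ∪ sq (n+1) d3) (sq (n+1) d4) := by
    rw [Set.disjoint_union_left, Set.disjoint_union_left]
    refine ⟨⟨?_, ?_⟩, ?_⟩ <;> · apply sq_disjoint; simp [d1, d2, d3, d4, Prod.ext_iff]; try omega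
  rw [hu, lintegral_union (measurableSet_sq _ _) hdisj4,
    lintegral_union (measurableSet_sq _ _) hdisj3,
    lintegral_union (measurableSet_sq _ _) hdisj12,
    hchild d1 (by simp), hchild d2 (by simp), hchild d3 (by simp), hchild d4 (by simp)]
  have hc : ∀ u : ℝ, θ * u - 4 * (θ * u)^2 = θ*u - 4*(θ*u)^2 := fun _ => rfl
  -- ∑ of ofReal * V(n+1) ≤ 4 * V(n+1) = V n
  rw [← add_mul, ← add_mul, ← add_mul]
  rw [V_succ n]
  have : ENNReal.ofReal (Real.exp (θ*(A d1 - Vc) - 4 * (θ*(A d1 - Vc))^2))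
      + ENNReal.ofReal (Real.exp (θ*(A d2 - Vc) - 4 * (θ*(A d2 - Vc))^2))
      + ENNReal.ofReal (Real.exp (θ*(A d3 - Vc) - 4 * (θ*(A d3 - Vc))^2))
      + ENNReal.ofReal (Real.exp (θ*(A d4 - Vc) - 4 * (θ*(A d4 - Vc))^2)) ≤ (4:ℝ≥0∞) := by
    rw [← ENNReal.ofReal_add (by positivity) (by positivity),
      ← ENNReal.ofReal_add (by positivity) (by positivity),
      ← ENNReal.ofReal_add (by positivity) (by positivity)]
    rw [show (4:ℝ≥0∞) = ENNReal.ofReal (4:ℝ) by norm_num]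
    exact ENNReal.ofReal_le_ofReal key
  exact mul_le_mul_left this _

variable {f : P2 → ℝ}

/-- Partial sums of the square function starting at level `m`. -/
def Ysum (m n : ℕ) (f : P2 → ℝ) (x : P2) : ℝ := ∑ k ∈ Finset.Ico m n, (Dk k f x)^2

/-- The exponential supermartingale. -/
def Yexp (θ : ℝ) (m n : ℕ) (f : P2 → ℝ) (x : P2) : ℝ :=
  Real.exp (θ * (Ej n f x - Ej m f x) - 4 * θ^2 * Ysum m n f x)

lemma measurable_Ysum (m n : ℕ) (f : P2 → ℝ) : Measurable (Ysum m n f) := by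
  apply Finset.measurable_sum
  intro k _
  exact (measurable_Dk k f).pow_const 2

lemma measurable_Yexp (θ : ℝ) (m n : ℕ) (f : P2 → ℝ) : Measurable (Yexp θ m n f) := by
  apply Real.measurable_exp.comp
  exact (measurable_const.mul ((measurable_Ej n f).sub (measurable_Ej m f))).sub
    (measurable_const.mul (measurable_Ysum m n f))

lemma Ysum_mono (m : ℕ) (x : P2) : Monotone fun n => Ysum m n f x := by
  intro n n' h
  exact Finset.sum_le_sum_of_subset_of_nonneg (Finset.Ico_subset_Ico le_rfl h)
    (fun k _ _ => sq_nonneg _)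

lemma Yexp_succ {θ : ℝ} {m n : ℕ} (h : m ≤ n) (x : P2) :
    Yexp θ m (n+1) f x = Yexp θ m n f x *
      Real.exp (θ * Dk n f x - 4 * θ^2 * (Dk n f x)^2) := by
  unfold Yexp
  rw [← Real.exp_add]
  congr 1
  unfold Ysum
  rw [Finset.sum_Ico_succ_top h]
  unfold Dk
  ring

lemma Yexp_congr {θ : ℝ} {m n : ℕ} (hmn : m ≤ n) {c : ℤ × ℤ} {x y : P2}
    (hx : x ∈ sq n c) (hy : y ∈ sq n c) : Yexp θ m n f x = Yexp θ m n f y := by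
  have hY : Ysum m n f x = Ysum m n f y :=
    Finset.sum_congr rfl fun k hk => by rw [Dk_congr (Finset.mem_Ico.1 hk).2 f hx hy]
  unfold Yexp
  rw [Ej_congr le_rfl f hx hy, Ej_congr hmn f hx hy, hY]

/-- Partition a lintegral over a measurable set into level-`n` squares. -/
lemma lintegral_sq_partition (n : ℕ) {U : Set P2} (hU : MeasurableSet U) (g : P2 → ℝ≥0∞) :
    ∫⁻ y in U, g y = ∑' d : ℤ × ℤ, ∫⁻ y in sq n d ∩ U, g y := by
  have h : U = ⋃ d : ℤ × ℤ, sq n d ∩ U := by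
    rw [← Set.iUnion_inter, iUnion_sq, Set.univ_inter]
  conv_lhs => rw [h]
  exact lintegral_iUnion (fun d => (measurableSet_sq n d).inter hU)
    (fun i j hij => ((sq_disjoint hij).mono inf_le_left inf_le_left)) g

/-- The supermartingale estimate. -/
lemma super (hfm : Measurable f) (hf : MemLp f 2 volume) (θ : ℝ) (m : ℕ) (a : ℤ × ℤ) :
    ∀ n, m ≤ n → ∫⁻ y in sq m a, ENNReal.ofReal (Yexp θ m n f y) ≤ V m := by
  intro n hn
  induction n, hn using Nat.le_induction with
  | base =>
      have h1 : ∀ y ∈ sq m a, ENNReal.ofReal (Yexp θ m m f y) = 1 := by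
        intro y _
        simp [Yexp, Ysum]
      rw [setLIntegral_congr_fun (measurableSet_sq _ _) h1]
      simp [volume_sq]
  | succ n hmn ih =>
      have key : ∀ d : ℤ × ℤ, ∫⁻ y in sq n d ∩ sq m a, ENNReal.ofReal (Yexp θ m (n+1) f y)
          ≤ ∫⁻ y in sq n d ∩ sq m a, ENNReal.ofReal (Yexp θ m n f y) := by
        intro d
        rcases sq_subset_or_disjoint hmn a d with hsub | hdisj
        · rw [Set.inter_eq_left.2 hsub]
          rcases Set.eq_empty_or_nonempty (sq n d) with he | ⟨x₀, hx₀⟩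
          · rw [he]; simp
          · have hc0 : (0:ℝ) ≤ Yexp θ m n f x₀ := le_of_lt (Real.exp_pos _)
            have hcongr1 : ∀ y ∈ sq n d, ENNReal.ofReal (Yexp θ m (n+1) f y)
                = ENNReal.ofReal (Yexp θ m n f x₀) *
                  ENNReal.ofReal (Real.exp (θ * Dk n f y - 4 * θ^2 * (Dk n f y)^2)) := by
              intro y hy
              rw [Yexp_succ hmn, Yexp_congr hmn hy hx₀,
                ENNReal.ofReal_mul hc0]
            have hcongr2 : ∀ y ∈ sq n d, ENNReal.ofReal (Yexp θ m n f y)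
                = ENNReal.ofReal (Yexp θ m n f x₀) := by
              intro y hy
              rw [Yexp_congr hmn hy hx₀]
            rw [setLIntegral_congr_fun (measurableSet_sq _ _) hcongr1,
              setLIntegral_congr_fun (measurableSet_sq _ _) hcongr2,
              lintegral_const_mul _ (by
                exact (ENNReal.measurable_ofReal.comp (Real.measurable_exp.comp
                  ((measurable_const.mul (measurable_Dk n f)).sub
                    (measurable_const.mul ((measurable_Dk n f).pow_const 2)))))),
              setLIntegral_const, volume_sq]
            calc ENNReal.ofReal (Yexp θ m n f x₀) *
                  (∫⁻ y in sq n d, ENNReal.ofReal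
                    (Real.exp (θ * Dk n f y - 4 * θ^2 * (Dk n f y)^2)))
                ≤ ENNReal.ofReal (Yexp θ m n f x₀) * V n :=
                  mul_le_mul_right (step_bound hfm hf θ n d) _
              _ = _ := by rw [mul_comm]
        · rw [hdisj]; simp
      calc ∫⁻ y in sq m a, ENNReal.ofReal (Yexp θ m (n+1) f y)
          = ∑' d : ℤ × ℤ, ∫⁻ y in sq n d ∩ sq m a, ENNReal.ofReal (Yexp θ m (n+1) f y) :=
            lintegral_sq_partition n (measurableSet_sq m a) _
        _ ≤ ∑' d : ℤ × ℤ, ∫⁻ y in sq n d ∩ sq m a, ENNReal.ofReal (Yexp θ m n f y) :=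
            ENNReal.tsum_le_tsum key
        _ = ∫⁻ y in sq m a, ENNReal.ofReal (Yexp θ m n f y) :=
            (lintegral_sq_partition n (measurableSet_sq m a) _).symm
        _ ≤ V m := ih

/-- One-sided sub-Gaussian estimate on a dyadic square via Fatou. -/
lemma oneSide (hfm : Measurable f) (hf : MemLp f 2 volume) (m : ℕ) (a : ℤ × ℤ)
    {t s : ℝ} (ht : 0 < t) (hs : 0 < s)
    {Cm : Set P2} (hCm : MeasurableSet Cm)
    (hconv : ∀ x ∈ Cm, Tendsto (fun n => Ej n f x) atTop (𝓝 (f x))) :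
    volume (sq m a ∩ Cm ∩ {x | (∀ n, Ysum m n f x ≤ s^2) ∧ t < f x - Ej m f x})
      ≤ ENNReal.ofReal (Real.exp (-t^2/(16*s^2))) * V m := by
  set θ : ℝ := t / (8 * s^2) with hθdef
  have hθ : 0 < θ := by positivity
  set c : ℝ := t^2/(16*s^2) with hcdef
  have hc : θ * t - 4 * θ^2 * s^2 = c := by
    rw [hθdef, hcdef]; field_simp; ring
  set S : Set P2 := sq m a ∩ Cm ∩ {x | (∀ n, Ysum m n f x ≤ s^2) ∧ t < f x - Ej m f x} with hSdef
  have hSmeas : MeasurableSet S := by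
    refine ((measurableSet_sq m a).inter hCm).inter ?_
    rw [Set.setOf_and]
    refine MeasurableSet.inter ?_ ?_
    · rw [Set.setOf_forall]
      exact MeasurableSet.iInter fun n =>
        measurableSet_le (measurable_Ysum m n f) measurable_const
    · exact measurableSet_lt measurable_const (hfm.sub (measurable_Ej m f))
  -- pointwise lower bound for the liminf on S
  have hpt : ∀ x ∈ S, ENNReal.ofReal (Real.exp c)
      ≤ liminf (fun n => ENNReal.ofReal (Yexp θ m n f x)) atTop := by
    rintro x ⟨⟨hxQ, hxC⟩, hb, hxt⟩
    have hmono : Monotone fun n => Ysum m n f x := Ysum_mono m x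
    have hbdd : BddAbove (Set.range fun n => Ysum m n f x) := ⟨s^2, by
      rintro _ ⟨n, rfl⟩; exact hb n⟩
    set L : ℝ := ⨆ n, Ysum m n f x with hLdef
    have hLle : L ≤ s^2 := ciSup_le hb
    have hYtend : Tendsto (fun n => Ysum m n f x) atTop (𝓝 L) :=
      tendsto_atTop_ciSup hmono hbdd
    have hEtend : Tendsto (fun n => Ej n f x) atTop (𝓝 (f x)) := hconv x hxC
    have hexp : Tendsto (fun n => Yexp θ m n f x) atTop
        (𝓝 (Real.exp (θ * (f x - Ej m f x) - 4 * θ^2 * L))) := by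
      apply (Real.continuous_exp.tendsto _).comp
      exact ((hEtend.sub_const _).const_mul θ).sub (hYtend.const_mul _)
    have hliminf : liminf (fun n => ENNReal.ofReal (Yexp θ m n f x)) atTop
        = ENNReal.ofReal (Real.exp (θ * (f x - Ej m f x) - 4 * θ^2 * L)) :=
      ((ENNReal.continuous_ofReal.tendsto _).comp hexp).liminf_eq
    rw [hliminf]
    apply ENNReal.ofReal_le_ofReal
    apply Real.exp_le_exp.2
    rw [← hc]
    have h1 : θ * t ≤ θ * (f x - Ej m f x) := by nlinarith
    nlinarith
  -- Fatou chain
  have chain : ENNReal.ofReal (Real.exp c) * volume S ≤ V m := by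
    calc ENNReal.ofReal (Real.exp c) * volume S
        = ∫⁻ _ in S, ENNReal.ofReal (Real.exp c) := (setLIntegral_const _ _).symm
      _ ≤ ∫⁻ x in S, liminf (fun n => ENNReal.ofReal (Yexp θ m n f x)) atTop := by
          apply lintegral_mono_ae
          exact (ae_restrict_iff' hSmeas).2 (ae_of_all _ hpt)
      _ ≤ ∫⁻ x in sq m a, liminf (fun n => ENNReal.ofReal (Yexp θ m n f x)) atTop :=
          lintegral_mono' (Measure.restrict_mono
            (by rw [hSdef]; exact fun x hx => hx.1.1) le_rfl) le_rfl
      _ ≤ liminf (fun n => ∫⁻ x in sq m a, ENNReal.ofReal (Yexp θ m n f x)) atTop :=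
          lintegral_liminf_le fun n =>
            ENNReal.measurable_ofReal.comp (measurable_Yexp θ m n f)
      _ ≤ V m := by
          apply liminf_le_of_frequently_le'
          apply Filter.Eventually.frequently
          filter_upwards [eventually_ge_atTop m] with n hn
          exact super hfm hf θ m a n hn
  have hinv : ENNReal.ofReal (Real.exp (-c)) * ENNReal.ofReal (Real.exp c) = 1 := by
    rw [← ENNReal.ofReal_mul (le_of_lt (Real.exp_pos _)), ← Real.exp_add]
    simp
  have hfin : volume S = ENNReal.ofReal (Real.exp (-c)) * (ENNReal.ofReal (Real.exp c) * volume S) := by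
    rw [← mul_assoc, hinv, one_mul]
  rw [show -t^2/(16*s^2) = -c by rw [hcdef]; ring]
  calc volume S = ENNReal.ofReal (Real.exp (-c)) * (ENNReal.ofReal (Real.exp c) * volume S) := hfin
    _ ≤ ENNReal.ofReal (Real.exp (-c)) * V m := mul_le_mul_right chain _

variable {f : P2 → ℝ}

lemma coord_le_dist (x y : P2) (i : Fin 2) : |y i - x i| ≤ dist y x := by
  rw [EuclideanSpace.dist_eq]
  have h1 : |y i - x i| = Real.sqrt (dist (y i) (x i)^2) := by
    rw [Real.dist_eq, Real.sqrt_sq_eq_abs, abs_abs]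
  rw [h1]
  apply Real.sqrt_le_sqrt
  exact Finset.single_le_sum (f := fun j => dist (y j) (x j)^2)
    (fun j _ => sq_nonneg _) (Finset.mem_univ i)

lemma abs_sub_le_width {l u a b : ℝ} (ha : a ∈ Ico l u) (hb : b ∈ Ico l u) : |b - a| ≤ u - l := by
  obtain ⟨h1, h2⟩ := ha; obtain ⟨h3, h4⟩ := hb
  rw [abs_le]; constructor <;> linarith

lemma dist_le_of_mem_sq {n : ℕ} {c : ℤ × ℤ} {x y : P2}
    (hx : x ∈ sq n c) (hy : y ∈ sq n c) : dist y x ≤ 2 * ((2:ℝ)^n)⁻¹ := by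
  have hpow : (0:ℝ) < (2:ℝ)^n := by positivity
  have hco : ∀ i : Fin 2, dist (y i) (x i) ≤ ((2:ℝ)^n)⁻¹ := by
    intro i
    have hbox := sq_eq_box n c
    rw [hbox] at hx hy
    obtain ⟨hx0, hx1⟩ := hx; obtain ⟨hy0, hy1⟩ := hy
    have hw0 : ((c.1:ℝ)+1)/2^n - (c.1:ℝ)/2^n = ((2:ℝ)^n)⁻¹ := by field_simp; ring
    have hw1 : ((c.2:ℝ)+1)/2^n - (c.2:ℝ)/2^n = ((2:ℝ)^n)⁻¹ := by field_simp; ring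
    rw [Real.dist_eq]
    fin_cases i
    · exact le_of_le_of_eq (abs_sub_le_width hx0 hy0) hw0
    · exact le_of_le_of_eq (abs_sub_le_width hx1 hy1) hw1
  rw [EuclideanSpace.dist_eq]
  have hsum : ∑ i : Fin 2, dist (y i) (x i)^2 ≤ (2 * ((2:ℝ)^n)⁻¹)^2 := by
    rw [Fin.sum_univ_two]
    have h0 := hco 0; have h1 := hco 1
    have d0 : (0:ℝ) ≤ dist (y 0) (x 0) := dist_nonneg
    have d1 : (0:ℝ) ≤ dist (y 1) (x 1) := dist_nonneg
    nlinarith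
  calc Real.sqrt (∑ i : Fin 2, dist (y i) (x i)^2) ≤ Real.sqrt ((2 * ((2:ℝ)^n)⁻¹)^2) :=
        Real.sqrt_le_sqrt hsum
    _ = 2 * ((2:ℝ)^n)⁻¹ := Real.sqrt_sq (by positivity)

lemma closedBall_subset_box (x : P2) (δ : ℝ) :
    closedBall x δ ⊆ {y : P2 | y 0 ∈ Icc (x 0 - δ) (x 0 + δ) ∧ y 1 ∈ Icc (x 1 - δ) (x 1 + δ)} := by
  intro y hy
  rw [mem_closedBall] at hy
  have h0 := (coord_le_dist x y 0).trans hy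
  have h1 := (coord_le_dist x y 1).trans hy
  rw [abs_le] at h0 h1
  exact ⟨⟨by linarith [h0.1], by linarith [h0.2]⟩, ⟨by linarith [h1.1], by linarith [h1.2]⟩⟩

lemma volume_closedBall_le (x : P2) (δ : ℝ) (hδ : 0 ≤ δ) :
    volume (closedBall x δ) ≤ ENNReal.ofReal ((2*δ)^2) := by
  calc volume (closedBall x δ)
      ≤ volume {y : P2 | y 0 ∈ Icc (x 0 - δ) (x 0 + δ) ∧ y 1 ∈ Icc (x 1 - δ) (x 1 + δ)} :=
        measure_mono (closedBall_subset_box x δ)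
    _ = ENNReal.ofReal ((2*δ)^2) := by
        rw [volume_box _ _ measurableSet_Icc measurableSet_Icc, Real.volume_Icc,
          Real.volume_Icc, show x 0 + δ - (x 0 - δ) = 2*δ by ring,
          show x 1 + δ - (x 1 - δ) = 2*δ by ring,
          ← ENNReal.ofReal_mul (by linarith)]
        congr 1
        ring

/-- Lebesgue differentiation along dyadic squares. -/
lemma ae_tendsto_Ej (hfm : Measurable f) (hf : MemLp f 2 volume) :
    ∀ᵐ x : P2, Tendsto (fun n => Ej n f x) atTop (𝓝 (f x)) := by
  have hloc : LocallyIntegrable f volume := hf.locallyIntegrable (by norm_num)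
  filter_upwards [IsUnifLocDoublingMeasure.ae_tendsto_average_norm_sub volume hloc 1] with x hx
  set δ : ℕ → ℝ := fun n => 2 * ((2:ℝ)^n)⁻¹ with hδdef
  have hδpos : ∀ n, 0 < δ n := fun n => by positivity
  have hδlim : Tendsto δ atTop (𝓝[>] 0) := by
    apply tendsto_nhdsWithin_of_tendsto_nhds_of_eventually_within
    · have h2 : Tendsto (fun n : ℕ => ((2:ℝ)^n)⁻¹) atTop (𝓝 0) := by
        simp_rw [← inv_pow]
        exact tendsto_pow_atTop_nhds_zero_of_lt_one (by norm_num) (by norm_num)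
      have := h2.const_mul (2:ℝ)
      simpa using this
    · exact Eventually.of_forall fun n => hδpos n
  have havg := hx (fun _ => x) δ hδlim
    (Eventually.of_forall fun n => by simp [(hδpos n).le])
  have hbound : ∀ n : ℕ, |Ej n f x - f x| ≤ 16 * ⨍ y in closedBall x (δ n), ‖f y - f x‖ := by
    intro n
    set cx : ℤ × ℤ := (⌊(2:ℝ)^n * x 0⌋, ⌊(2:ℝ)^n * x 1⌋) with hcx
    have hxmem : x ∈ sq n cx := mem_sq_self n x
    set B : Set P2 := closedBall x (δ n) with hB
    have hQB : sq n cx ⊆ B := fun y hy => mem_closedBall.2 (dist_le_of_mem_sq hxmem hy)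
    have hBfin : volume B ≠ ⊤ := measure_closedBall_lt_top.ne
    have hBpos : 0 < (volume B).toReal := by
      apply ENNReal.toReal_pos _ hBfin
      exact (measure_closedBall_pos volume x (hδpos n)).ne'
    have hintB : IntegrableOn (fun y => ‖f y - f x‖) B volume := by
      apply Integrable.norm
      exact (hloc.integrableOn_isCompact (isCompact_closedBall x (δ n))).sub
        (integrableOn_const measure_closedBall_lt_top.ne)
    have hvolQ : volume (sq n cx) = V n := volume_sq n cx
    have hVtoReal : (V n).toReal = ((4:ℝ)^n)⁻¹ := by
      unfold V; rw [ENNReal.toReal_ofReal (by positivity)]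
    have h4 : (2:ℝ)^(2*n) * ((4:ℝ)^n)⁻¹ = 1 := by
      rw [pow_mul, show (2:ℝ)^2 = 4 by norm_num, mul_inv_cancel₀ (by positivity)]
    have hintQ : IntegrableOn f (sq n cx) volume :=
      integrableOn_of_fin hf (by rw [hvolQ]; exact V_ne_top n)
    have hintQc : IntegrableOn (fun _ => f x) (sq n cx) volume :=
      integrableOn_const (by rw [hvolQ]; exact V_ne_top n)
    have hEj : Ej n f x - f x = (2:ℝ)^(2*n) * ∫ y in sq n cx, (f y - f x) := by
      have hfx : (2:ℝ)^(2*n) * (((4:ℝ)^n)⁻¹ * f x) = f x := by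
        rw [← mul_assoc, h4, one_mul]
      rw [integral_sub hintQ hintQc, setIntegral_const, measureReal_def, hvolQ, hVtoReal, smul_eq_mul,
        mul_sub, hfx, Ej_apply_sq f hxmem]
    have habs : |Ej n f x - f x| ≤ (2:ℝ)^(2*n) * ∫ y in sq n cx, ‖f y - f x‖ := by
      rw [hEj, abs_mul, abs_of_pos (show (0:ℝ) < (2:ℝ)^(2*n) by positivity)]
      apply mul_le_mul_of_nonneg_left _ (by positivity)
      calc |∫ y in sq n cx, (f y - f x)| = ‖∫ y in sq n cx, (f y - f x)‖ :=
            (Real.norm_eq_abs _).symm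
        _ ≤ ∫ y in sq n cx, ‖f y - f x‖ := norm_integral_le_integral_norm _
    have hQle : ∫ y in sq n cx, ‖f y - f x‖ ≤ ∫ y in B, ‖f y - f x‖ := by
      apply setIntegral_mono_set hintB
      · exact ae_of_all _ fun y => norm_nonneg _
      · exact HasSubset.Subset.eventuallyLE hQB
    have havg_eq : ∫ y in B, ‖f y - f x‖ = (volume B).toReal * ⨍ y in B, ‖f y - f x‖ := by
      rw [setAverage_eq, measureReal_def, smul_eq_mul, ← mul_assoc, mul_inv_cancel₀ (ne_of_gt hBpos), one_mul]
    have hvolB : (2:ℝ)^(2*n) * (volume B).toReal ≤ 16 := by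
      have h1 : (volume B).toReal ≤ (2*δ n)^2 := by
        have hb := volume_closedBall_le x (δ n) (hδpos n).le
        calc (volume B).toReal ≤ (ENNReal.ofReal ((2*δ n)^2)).toReal :=
              ENNReal.toReal_mono ENNReal.ofReal_ne_top hb
          _ = (2*δ n)^2 := ENNReal.toReal_ofReal (by positivity)
      have e1 : ((2:ℝ)^n)^2 = (4:ℝ)^n := by
        rw [← pow_mul, mul_comm, pow_mul]; norm_num
      have e2 : (((2:ℝ)^n)⁻¹)^2 = ((4:ℝ)^n)⁻¹ := by rw [inv_pow, e1]
      have h2 : (2*δ n)^2 = 16 * ((4:ℝ)^n)⁻¹ := by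
        calc (2*δ n)^2 = 16 * (((2:ℝ)^n)⁻¹)^2 := by rw [hδdef]; ring
          _ = 16 * ((4:ℝ)^n)⁻¹ := by rw [e2]
      nlinarith [h4, ENNReal.toReal_nonneg (a := volume B)]
    have havg_nonneg : 0 ≤ ⨍ y in B, ‖f y - f x‖ := by
      rw [setAverage_eq, smul_eq_mul]
      exact mul_nonneg (by positivity) (setIntegral_nonneg (measurableSet_closedBall)
        fun y _ => norm_nonneg _)
    calc |Ej n f x - f x| ≤ (2:ℝ)^(2*n) * ∫ y in sq n cx, ‖f y - f x‖ := habs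
      _ ≤ (2:ℝ)^(2*n) * ∫ y in B, ‖f y - f x‖ :=
          mul_le_mul_of_nonneg_left hQle (by positivity)
      _ = ((2:ℝ)^(2*n) * (volume B).toReal) * ⨍ y in B, ‖f y - f x‖ := by
          rw [havg_eq]; ring
      _ ≤ 16 * ⨍ y in B, ‖f y - f x‖ := mul_le_mul_of_nonneg_right hvolB havg_nonneg
  have hto : Tendsto (fun n => |Ej n f x - f x|) atTop (𝓝 0) := by
    apply squeeze_zero (fun n => abs_nonneg _) hbound
    have := havg.const_mul (16:ℝ)
    simpa using this
  rw [tendsto_iff_norm_sub_tendsto_zero]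
  simpa [Real.norm_eq_abs] using hto

variable {f : P2 → ℝ}

lemma Ej_neg (j : ℕ) (f : P2 → ℝ) (x : P2) : Ej j (fun y => -f y) x = -Ej j f x := by
  unfold Ej
  rw [integral_neg, smul_eq_mul, smul_eq_mul]
  ring

lemma Dk_neg (k : ℕ) (f : P2 → ℝ) (x : P2) : Dk k (fun y => -f y) x = -Dk k f x := by
  unfold Dk
  rw [Ej_neg, Ej_neg]
  ring

lemma Ysum_neg (m n : ℕ) (f : P2 → ℝ) (x : P2) : Ysum m n (fun y => -f y) x = Ysum m n f x := by
  unfold Ysum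
  exact Finset.sum_congr rfl fun k _ => by rw [Dk_neg]; ring

lemma measurable_sqFn (f : P2 → ℝ) : Measurable (sqFn f) := by
  unfold sqFn
  apply Measurable.pow_const
  exact Measurable.ennreal_tsum fun k => ((measurable_Dk k f).nnnorm.coe_nnreal_ennreal).pow_const 2

lemma ennnorm_sq_eq (r : ℝ) : (‖r‖₊ : ℝ≥0∞)^2 = ENNReal.ofReal (r^2) := by
  rw [← enorm_eq_nnnorm, Real.enorm_eq_ofReal_abs, ← ENNReal.ofReal_pow (abs_nonneg r), sq_abs]

/-- Consequences of a bound on the square function. -/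
lemma sqFn_lt_bounds {x : P2} {s : ℝ} (hs : 0 < s) (h : sqFn f x < ENNReal.ofReal s) :
    (∀ m n, Ysum m n f x ≤ s^2) ∧ (∀ k, |Dk k f x| ≤ s) := by
  set T : ℝ≥0∞ := ∑' k : ℕ, (‖Dk k f x‖₊ : ℝ≥0∞) ^ 2 with hT
  have hsq : sqFn f x = T ^ (1/2 : ℝ) := rfl
  have hTne : T ≠ ⊤ := by
    intro htop
    rw [hsq, htop, ENNReal.top_rpow_of_pos (by norm_num)] at h
    exact (not_top_lt h).elim
  have hTlt : T < ENNReal.ofReal (s^2) := by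
    rcases eq_or_ne T 0 with h0 | h0
    · rw [h0]; exact ENNReal.ofReal_pos.2 (by positivity)
    · have h2 : T = (T ^ (1/2:ℝ))^2 := by
        rw [pow_two, ← ENNReal.rpow_add _ _ h0 hTne]
        norm_num
      have h3 : (T ^ (1/2:ℝ))^2 < (ENNReal.ofReal s)^2 :=
        ENNReal.pow_lt_pow_left (by norm_num) (by rw [← hsq]; exact h)
      calc T = (T ^ (1/2:ℝ))^2 := h2
        _ < (ENNReal.ofReal s)^2 := h3
        _ = ENNReal.ofReal (s^2) := (ENNReal.ofReal_pow hs.le 2).symm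
  constructor
  · intro m n
    have hsum : ENNReal.ofReal (Ysum m n f x) ≤ T := by
      rw [Ysum, ENNReal.ofReal_sum_of_nonneg (fun k _ => sq_nonneg _)]
      calc ∑ k ∈ Finset.Ico m n, ENNReal.ofReal ((Dk k f x)^2)
          = ∑ k ∈ Finset.Ico m n, (‖Dk k f x‖₊ : ℝ≥0∞)^2 := by
            exact Finset.sum_congr rfl fun k _ => (ennnorm_sq_eq _).symm
        _ ≤ T := ENNReal.sum_le_tsum _
    have := hsum.trans_lt hTlt
    rw [ENNReal.ofReal_lt_ofReal_iff_of_nonneg ?_] at this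
    · exact this.le
    · exact Finset.sum_nonneg fun k _ => sq_nonneg _
  · intro k
    have h1 : ENNReal.ofReal ((Dk k f x)^2) ≤ T := by
      rw [← ennnorm_sq_eq]
      exact ENNReal.le_tsum k
    have h2 := h1.trans_lt hTlt
    rw [ENNReal.ofReal_lt_ofReal_iff_of_nonneg (sq_nonneg _)] at h2
    nlinarith [abs_nonneg (Dk k f x), sq_abs (Dk k f x)]

lemma measure_sq_partition (m : ℕ) {U : Set P2} (hU : MeasurableSet U) :
    volume U = ∑' d : ℤ × ℤ, volume (sq m d ∩ U) := by
  have h : U = ⋃ d : ℤ × ℤ, sq m d ∩ U := by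
    rw [← Set.iUnion_inter, iUnion_sq, Set.univ_inter]
  conv_lhs => rw [h]
  exact measure_iUnion
    (fun i j hij => ((sq_disjoint hij).mono inf_le_left inf_le_left))
    (fun d => (measurableSet_sq m d).inter hU)

/-- Main form of the Chang–Wilson–Wolff inequality, for measurable `f`. -/
lemma main (hfm : Measurable f) (hf : MemLp f 2 volume)
    {lam ε : ℝ} (hlam : 0 < lam) (hε : 0 < ε) (hε1 : ε < 1) :
    volume {x : P2 | 2 * lam < |f x - Ej 0 f x| ∧ sqFn f x < ENNReal.ofReal (ε * lam)} ≤
      ENNReal.ofReal ((2 * Real.exp (9/16)) * Real.exp (-(1/16) / ε ^ 2)) *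
        volume {x : P2 | ENNReal.ofReal (ε * lam) < ⨆ k : ℕ, (‖Ej k f x‖₊ : ℝ≥0∞)} := by
  set s : ℝ := ε * lam with hsdef
  have hs : 0 < s := by positivity
  set K : ℝ≥0∞ := ENNReal.ofReal ((2 * Real.exp (9/16)) * Real.exp (-(1/16) / ε ^ 2)) with hK
  set A : Set P2 := {x | 2 * lam < |f x - Ej 0 f x| ∧ sqFn f x < ENNReal.ofReal s} with hA
  set B : Set P2 := {x | ENNReal.ofReal s < ⨆ k : ℕ, (‖Ej k f x‖₊ : ℝ≥0∞)} with hB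
  have hBiff : ∀ x, x ∈ B ↔ ∃ k, s < |Ej k f x| := by
    intro x
    rw [hB, Set.mem_setOf_eq, lt_iSup_iff]
    constructor <;> rintro ⟨k, hk⟩ <;> refine ⟨k, ?_⟩
    · rwa [← enorm_eq_nnnorm, Real.enorm_eq_ofReal_abs, ENNReal.ofReal_lt_ofReal_iff_of_nonneg hs.le] at hk
    · rwa [← enorm_eq_nnnorm, Real.enorm_eq_ofReal_abs, ENNReal.ofReal_lt_ofReal_iff_of_nonneg hs.le]
  have hAmeas : MeasurableSet A := by
    rw [hA, Set.setOf_and]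
    exact (measurableSet_lt measurable_const ((hfm.sub (measurable_Ej 0 f)).abs)).inter
      (measurableSet_lt (measurable_sqFn f) measurable_const)
  have hBmeas : MeasurableSet B :=
    measurableSet_lt measurable_const
      (Measurable.iSup fun k => (measurable_Ej k f).nnnorm.coe_nnreal_ennreal)
  -- the measurable convergence set
  set C : Set P2 := (toMeasurable volume
    {x | ¬ Tendsto (fun n => Ej n f x) atTop (𝓝 (f x))})ᶜ with hC
  have hCmeas : MeasurableSet C := (measurableSet_toMeasurable _ _).compl
  have hCc : volume Cᶜ = 0 := by
    rw [hC, compl_compl, measure_toMeasurable]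
    exact ae_iff.mp (ae_tendsto_Ej hfm hf)
  have hCconv : ∀ x ∈ C, Tendsto (fun n => Ej n f x) atTop (𝓝 (f x)) := by
    intro x hx
    by_contra h
    exact hx (subset_toMeasurable _ _ h)
  -- A ∩ C ⊆ B
  have hsub : A ∩ C ⊆ B := by
    rintro x ⟨⟨hx1, _⟩, hxC⟩
    rw [hBiff]
    by_contra h
    push_neg at h
    have hfx : |f x| ≤ s := by
      have habs : Tendsto (fun n => |Ej n f x|) atTop (𝓝 |f x|) :=
        (continuous_abs.tendsto _).comp (hCconv x hxC)
      exact le_of_tendsto habs (Eventually.of_forall h)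
    have : |f x - Ej 0 f x| ≤ 2*s := by
      calc |f x - Ej 0 f x| ≤ |f x| + |Ej 0 f x| := abs_sub _ _
        _ ≤ 2*s := by linarith [h 0]
    have hslam : s < lam := by
      rw [hsdef]; nlinarith
    linarith
  set D : Set P2 := A ∩ C with hD
  have hDmeas : MeasurableSet D := hAmeas.inter hCmeas
  have hAD : volume A ≤ volume D := by
    calc volume A ≤ volume (A ∩ C) + volume (A \ C) := by
          conv_lhs => rw [← Set.inter_union_diff A C]
          exact measure_union_le _ _
      _ ≤ volume D + 0 := by
          apply add_le_add le_rfl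
          calc volume (A \ C) ≤ volume Cᶜ := measure_mono fun x hx => hx.2
            _ = 0 := hCc
      _ = volume D := by rw [add_zero]
  -- stopping decomposition of B
  set Bm : ℕ → Set P2 := fun m => {x | s < |Ej m f x| ∧ ∀ j < m, |Ej j f x| ≤ s} with hBm
  have hBmmeas : ∀ m, MeasurableSet (Bm m) := by
    intro m
    rw [hBm]
    simp only [Set.setOf_and]
    refine (measurableSet_lt measurable_const (measurable_Ej m f).abs).inter ?_
    rw [Set.setOf_forall]
    refine MeasurableSet.iInter fun j => ?_
    by_cases hj : j < m
    · simp only [hj, forall_true_left]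
      exact measurableSet_le (measurable_Ej j f).abs measurable_const
    · have : {x : P2 | j < m → |Ej j f x| ≤ s} = univ := by
        ext x; simp [hj]
      rw [this]
      exact MeasurableSet.univ
  have hBmkey : ∀ a b, a < b → Disjoint (Bm a) (Bm b) := by
    intro a b hab
    rw [Set.disjoint_left]
    rintro x ⟨hx1, _⟩ ⟨_, hx2⟩
    exact absurd (hx2 a hab) (not_le.2 hx1)
  have hBmdisj : Pairwise (Function.onFun Disjoint Bm) := by
    intro m m' hmm
    show Disjoint (Bm m) (Bm m')
    rcases lt_or_gt_of_ne hmm with h | h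
    · exact hBmkey _ _ h
    · exact (hBmkey _ _ h).symm
  have hBunion : B = ⋃ m, Bm m := by
    ext x
    rw [hBiff]
    simp only [Set.mem_iUnion, hBm, Set.mem_setOf_eq]
    constructor
    · rintro ⟨k, hk⟩
      have hex : ∃ k, s < |Ej k f x| := ⟨k, hk⟩
      refine ⟨Nat.find hex, Nat.find_spec hex, fun j hj => ?_⟩
      exact not_lt.1 (Nat.find_min hex hj)
    · rintro ⟨m, hm, _⟩
      exact ⟨m, hm⟩
  -- Bm is a union of level-m squares
  have hBmsq : ∀ m d, sq m d ∩ Bm m = ∅ ∨ sq m d ⊆ Bm m := by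
    intro m d
    rcases Set.eq_empty_or_nonempty (sq m d ∩ Bm m) with he | ⟨z, hzd, hzB⟩
    · exact Or.inl he
    · right
      intro y hy
      obtain ⟨hz1, hz2⟩ := hzB
      constructor
      · rwa [Ej_congr le_rfl f hy hzd]
      · intro j hj
        rw [Ej_congr (le_of_lt hj) f hy hzd]
        exact hz2 j hj
  -- key per-square estimate
  have hKge : (ε ≥ 1/3) → (1:ℝ≥0∞) ≤ K := by
    intro hε3
    rw [hK, show (1:ℝ≥0∞) = ENNReal.ofReal 1 by simp]
    apply ENNReal.ofReal_le_ofReal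
    have h1 : (1/16:ℝ)/ε^2 ≤ 9/16 := by
      rw [div_le_iff₀ (by positivity)]
      nlinarith
    have h2 : Real.exp (-(1/16)/ε^2) ≥ Real.exp (-(9/16)) := by
      apply Real.exp_le_exp.2
      rw [neg_div]
      linarith
    have h3 : Real.exp (9/16) * Real.exp (-(9/16)) = 1 := by
      rw [← Real.exp_add]; simp
    nlinarith [Real.exp_pos (9/16), Real.exp_pos (-(9/16)), Real.exp_pos (-(1/16)/ε^2)]
  have hkey : ∀ m d, volume (D ∩ Bm m ∩ sq m d) ≤ K * volume (Bm m ∩ sq m d) := by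
    intro m d
    rcases hBmsq m d with hempty | hsubBm
    · have : D ∩ Bm m ∩ sq m d = ∅ := by
        rw [Set.eq_empty_iff_forall_notMem] at hempty ⊢
        rintro x ⟨⟨_, hxB⟩, hxd⟩
        exact hempty x ⟨hxd, hxB⟩
      rw [this]
      simp
    · have hBmsqd : Bm m ∩ sq m d = sq m d := Set.inter_eq_right.2 hsubBm
      rw [hBmsqd, volume_sq]
      rcases le_or_gt (1/3 : ℝ) ε with hε3 | hε3
      · calc volume (D ∩ Bm m ∩ sq m d) ≤ volume (sq m d) := measure_mono fun x hx => hx.2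
          _ = V m := volume_sq m d
          _ ≤ K * V m := by
              conv_lhs => rw [← one_mul (V m)]
              exact mul_le_mul_left (hKge hε3) _
      · -- main case : ε < 1/3
        set g : P2 → ℝ := fun y => -f y with hg
        have hgm : Measurable g := hfm.neg
        have hg2 : MemLp g 2 volume := hf.neg
        have hgconv : ∀ x ∈ C, Tendsto (fun n => Ej n g x) atTop (𝓝 (g x)) := by
          intro x hx
          have : (fun n => Ej n g x) = fun n => -Ej n f x := funext fun n => Ej_neg n f x
          rw [this, hg]
          exact (hCconv x hx).neg
        set Sp : Set P2 := sq m d ∩ C ∩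
          {x | (∀ n, Ysum m n f x ≤ s^2) ∧ lam < f x - Ej m f x} with hSp
        set Sm : Set P2 := sq m d ∩ C ∩
          {x | (∀ n, Ysum m n g x ≤ s^2) ∧ lam < g x - Ej m g x} with hSm
        have hDsub : D ∩ Bm m ∩ sq m d ⊆ Sp ∪ Sm := by
          rintro x ⟨⟨⟨⟨hx2lam, hxsq⟩, hxC⟩, hxBm⟩, hxd⟩
          obtain ⟨hY, hDk⟩ := sqFn_lt_bounds hs hxsq
          -- |f x - Ej m f x| > lam
          have hmain : lam < |f x - Ej m f x| := by
            rcases Nat.eq_zero_or_pos m with hm0 | hmpos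
            · subst hm0
              calc lam < 2*lam := by linarith
                _ < |f x - Ej 0 f x| := hx2lam
            · obtain ⟨hxm1, hxm2⟩ := hxBm
              have hEm1 : |Ej (m-1) f x| ≤ s := hxm2 (m-1) (Nat.sub_lt hmpos one_pos)
              have hE0 : |Ej 0 f x| ≤ s := hxm2 0 hmpos
              have hDkm : |Dk (m-1) f x| ≤ s := hDk (m-1)
              have hmm : m - 1 + 1 = m := Nat.succ_pred_eq_of_pos hmpos
              have hd : Dk (m-1) f x = Ej m f x - Ej (m-1) f x := by
                have h : Dk (m-1) f x = Ej (m-1+1) f x - Ej (m-1) f x := rfl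
                rwa [hmm] at h
              have hEm : |Ej m f x - Ej 0 f x| ≤ 3*s := by
                have e : Ej m f x - Ej 0 f x
                    = Dk (m-1) f x + (Ej (m-1) f x - Ej 0 f x) := by rw [hd]; ring
                rw [e]
                have h1 := abs_add_le (Dk (m-1) f x) (Ej (m-1) f x - Ej 0 f x)
                have h2 := abs_sub (Ej (m-1) f x) (Ej 0 f x)
                linarith
              have h3s : 3*s ≤ lam := by
                rw [hsdef]; nlinarith
              have habs2 := abs_sub_abs_le_abs_sub (f x - Ej 0 f x) (Ej m f x - Ej 0 f x)
              have heq : f x - Ej 0 f x - (Ej m f x - Ej 0 f x) = f x - Ej m f x := by ring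
              rw [heq] at habs2
              linarith
          rcases lt_or_ge (Ej m f x) (f x) with hsign | hsign
          · left
            refine ⟨⟨hxd, hxC⟩, hY m, ?_⟩
            rw [abs_of_pos (by linarith)] at hmain
            exact hmain
          · right
            refine ⟨⟨hxd, hxC⟩, fun n => by rw [Ysum_neg]; exact hY m n, ?_⟩
            have : g x - Ej m g x = -(f x - Ej m f x) := by
              rw [hg, Ej_neg]; ring
            rw [this]
            rw [abs_of_nonpos (by linarith)] at hmain
            linarith
        have hexp : -lam^2/(16*s^2) = -(1/16)/ε^2 := by
          rw [hsdef]
          field_simp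
        have hSple : volume Sp ≤ ENNReal.ofReal (Real.exp (-(1/16)/ε^2)) * V m := by
          have := oneSide hfm hf m d hlam hs hCmeas hCconv
          rwa [hexp] at this
        have hSmle : volume Sm ≤ ENNReal.ofReal (Real.exp (-(1/16)/ε^2)) * V m := by
          have := oneSide hgm hg2 m d hlam hs hCmeas hgconv
          rwa [hexp] at this
        calc volume (D ∩ Bm m ∩ sq m d) ≤ volume (Sp ∪ Sm) := measure_mono hDsub
          _ ≤ volume Sp + volume Sm := measure_union_le _ _
          _ ≤ (2 * ENNReal.ofReal (Real.exp (-(1/16)/ε^2))) * V m := by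
              rw [two_mul, add_mul]
              exact add_le_add hSple hSmle
          _ ≤ K * V m := by
              apply mul_le_mul_left
              rw [hK, show (2:ℝ≥0∞) = ENNReal.ofReal (2:ℝ) by norm_num,
                ← ENNReal.ofReal_mul (by norm_num)]
              apply ENNReal.ofReal_le_ofReal
              have h1 : (1:ℝ) ≤ Real.exp (9/16) := by
                rw [show (1:ℝ) = Real.exp 0 by simp]
                exact Real.exp_le_exp.2 (by norm_num)
              nlinarith [Real.exp_pos (-(1/16)/ε^2)]
  -- sum everything up
  have hDB : volume D = volume (D ∩ B) := by
    rw [Set.inter_eq_left.2 (hD ▸ hsub)]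
  have hsummed : volume D ≤ K * volume B := by
    have hDBm : D ∩ B = ⋃ m, D ∩ Bm m := by
      rw [hBunion, Set.inter_iUnion]
    have h1 : volume (D ∩ B) = ∑' m, volume (D ∩ Bm m) := by
      rw [hDBm]
      exact measure_iUnion (fun i j hij => ((hBmdisj hij).mono inf_le_right inf_le_right))
        (fun m => hDmeas.inter (hBmmeas m))
    have h2 : ∀ m, volume (D ∩ Bm m) ≤ K * volume (Bm m) := by
      intro m
      calc volume (D ∩ Bm m) = ∑' d : ℤ × ℤ, volume (sq m d ∩ (D ∩ Bm m)) :=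
            measure_sq_partition m (hDmeas.inter (hBmmeas m))
        _ ≤ ∑' d : ℤ × ℤ, K * volume (Bm m ∩ sq m d) := by
            apply ENNReal.tsum_le_tsum
            intro d
            calc volume (sq m d ∩ (D ∩ Bm m)) = volume (D ∩ Bm m ∩ sq m d) := by
                  rw [Set.inter_comm]
              _ ≤ K * volume (Bm m ∩ sq m d) := hkey m d
        _ = K * ∑' d : ℤ × ℤ, volume (sq m d ∩ Bm m) := by
            rw [ENNReal.tsum_mul_left]
            congr 1
            exact tsum_congr fun d => by rw [Set.inter_comm]
        _ = K * volume (Bm m) := by rw [← measure_sq_partition m (hBmmeas m)]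
    calc volume D = volume (D ∩ B) := hDB
      _ = ∑' m, volume (D ∩ Bm m) := h1
      _ ≤ ∑' m, K * volume (Bm m) := ENNReal.tsum_le_tsum h2
      _ = K * ∑' m, volume (Bm m) := ENNReal.tsum_mul_left
      _ = K * volume B := by
          congr 1
          rw [hBunion]
          exact (measure_iUnion hBmdisj hBmmeas).symm
  exact hAD.trans hsummed

end CWW

/-- **The Chang–Wilson–Wolff inequality.** There are constants `c₁, c₂ > 0` such that
for every `f ∈ L²(ℝ²)`, every `λ > 0` and every `0 < ε < 1`,
`|{x : |f(x) − E₀f(x)| > 2λ, Δ(f)(x) < ελ}| ≤ c₂ e^{−c₁/ε²} |{x : sup_{k≥0} |E_k f(x)| > ελ}|`. -/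
theorem chang_wilson_wolff :
    ∃ c₁ c₂ : ℝ, 0 < c₁ ∧ 0 < c₂ ∧
      ∀ f : P2 → ℝ, MemLp f 2 volume →
      ∀ lam : ℝ, 0 < lam → ∀ ε : ℝ, 0 < ε → ε < 1 →
        volume {x : P2 | 2 * lam < |f x - Ej 0 f x| ∧ sqFn f x < ENNReal.ofReal (ε * lam)} ≤
          ENNReal.ofReal (c₂ * Real.exp (-c₁ / ε ^ 2)) *
            volume {x : P2 | ENNReal.ofReal (ε * lam) < ⨆ k : ℕ, (‖Ej k f x‖₊ : ℝ≥0∞)} := by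
  refine ⟨1/16, 2 * Real.exp (9/16), by norm_num, by positivity, ?_⟩
  intro f hf lam hlam ε hε hε1
  set g : P2 → ℝ := hf.1.mk f with hgdef
  have hgm : Measurable g := hf.1.stronglyMeasurable_mk.measurable
  have hfg : f =ᵐ[volume] g := hf.1.ae_eq_mk
  have hg2 : MemLp g 2 volume := hf.ae_eq hfg
  have hEj : ∀ j, Ej j f = Ej j g := by
    intro j; funext x
    unfold Ej
    congr 1
    exact integral_congr_ae (ae_restrict_of_ae hfg)
  have hDk : ∀ k, Dk k f = Dk k g := fun k => by unfold Dk; rw [hEj, hEj]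
  have hsq : sqFn f = sqFn g := by
    funext x
    unfold sqFn
    congr 1
    exact tsum_congr fun k => by rw [hDk k]
  have hAeq : volume {x : P2 | 2 * lam < |f x - Ej 0 f x| ∧ sqFn f x < ENNReal.ofReal (ε * lam)}
      = volume {x : P2 | 2 * lam < |g x - Ej 0 g x| ∧ sqFn g x < ENNReal.ofReal (ε * lam)} := by
    apply measure_congr
    rw [Filter.eventuallyEq_set]
    filter_upwards [hfg] with x hx
    rw [hx, hEj 0, hsq]
  have hBeq : {x : P2 | ENNReal.ofReal (ε * lam) < ⨆ k : ℕ, (‖Ej k f x‖₊ : ℝ≥0∞)}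
      = {x : P2 | ENNReal.ofReal (ε * lam) < ⨆ k : ℕ, (‖Ej k g x‖₊ : ℝ≥0∞)} := by
    ext x
    simp_rw [hEj]
  rw [hAeq, hBeq]
  have hmain := CWW.main hgm hg2 hlam hε hε1
  calc volume {x : P2 | 2 * lam < |g x - Ej 0 g x| ∧ sqFn g x < ENNReal.ofReal (ε * lam)}
      ≤ ENNReal.ofReal ((2 * Real.exp (9/16)) * Real.exp (-(1/16) / ε ^ 2)) *
        volume {x : P2 | ENNReal.ofReal (ε * lam) < ⨆ k : ℕ, (‖Ej k g x‖₊ : ℝ≥0∞)} := hmain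
    _ = ENNReal.ofReal ((2 * Real.exp (9/16)) * Real.exp (-(1/16) / ε ^ 2)) *
        volume {x : P2 | ENNReal.ofReal (ε * lam) < ⨆ k : ℕ, (‖Ej k g x‖₊ : ℝ≥0∞)} := rfl
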